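/- arXiv:1902.03358 — 2 statements merged into one kernel-verified Lean document; each statement's English description precedes it below -/
import Mathlib

section
/- Let X be a locally compact, Hausdorff, connected space, let ρ be a quasi-linear functional on C₀(X) or on C_c(X), and let μ_ρ be the associated set function. Then: (i) μ_ρ(U) = sup{μ_ρ(K) : K compact, K ⊆ U} for every open U ⊆ X; (ii) μ_ρ(K ⊔ C) = μ_ρ(K) + μ_ρ(C) for all disjoint compact sets K, C ⊆ X; (iii) μ_ρ(U) = μ_ρ(K) + μ_ρ(U \ K) whenever K is compact, U is open, and K ⊆ U. -/
open Set Filter Topology MeasureTheory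
open scoped ENNReal BoundedContinuousFunction

universe u

/-- A topological measure on `X`: a set function on subsets of `X` (only its values on open
and closed sets matter), not identically `∞` on open/closed sets, satisfying (TM1)–(TM3). -/
structure TopMeasure (X : Type u) [TopologicalSpace X] where
  toFun : Set X → ℝ≥0∞
  not_all_top : ∃ A : Set X, (IsOpen A ∨ IsClosed A) ∧ toFun A ≠ ∞
  tm1 : ∀ A B : Set X, Disjoint A B → (IsOpen A ∨ IsCompact A) → (IsOpen B ∨ IsCompact B) →
      (IsOpen (A ∪ B) ∨ IsCompact (A ∪ B)) → toFun (A ∪ B) = toFun A + toFun B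
  tm2 : ∀ U : Set X, IsOpen U → toFun U = ⨆ K ∈ {K : Set X | IsCompact K ∧ K ⊆ U}, toFun K
  tm3 : ∀ F : Set X, IsClosed F → toFun F = ⨅ U ∈ {U : Set X | IsOpen U ∧ F ⊆ U}, toFun U

/-- `μ` is compact-finite. -/
def TopMeasure.CompactFinite {X : Type u} [TopologicalSpace X] (μ : TopMeasure X) : Prop :=
  ∀ K : Set X, IsCompact K → μ.toFun K ≠ ∞

/-- The set of compactly supported continuous functions, inside `C_b(X)`. -/
def CcS (X : Type u) [TopologicalSpace X] : Set (X →ᵇ ℝ) :=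
  {f | HasCompactSupport (f : X → ℝ)}

/-- The set of continuous functions vanishing at infinity, inside `C_b(X)`. -/
def C0S (X : Type u) [TopologicalSpace X] : Set (X →ᵇ ℝ) :=
  {f | Tendsto (f : X → ℝ) (cocompact X) (nhds 0)}

/-- `𝔅` is a (non-unital) subalgebra of `C_b(X)`. -/
def IsSubalgS {X : Type u} [TopologicalSpace X] (𝔅 : Set (X →ᵇ ℝ)) : Prop :=
  (∀ f g : X →ᵇ ℝ, f ∈ 𝔅 → g ∈ 𝔅 → f + g ∈ 𝔅) ∧
  (∀ f g : X →ᵇ ℝ, f ∈ 𝔅 → g ∈ 𝔅 → f * g ∈ 𝔅) ∧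
  (∀ (c : ℝ) (f : X →ᵇ ℝ), f ∈ 𝔅 → c • f ∈ 𝔅)

/-- The singly generated subalgebra `B(h)`: the smallest closed (in `𝔅`) subalgebra of `𝔅`
containing `h`. -/
def sgen {X : Type u} [TopologicalSpace X] (𝔅 : Set (X →ᵇ ℝ)) (h : X →ᵇ ℝ) :
    Set (X →ᵇ ℝ) :=
  ⋂₀ {S : Set (X →ᵇ ℝ) | S ⊆ 𝔅 ∧ h ∈ S ∧
      (∀ f g : X →ᵇ ℝ, f ∈ S → g ∈ S → f + g ∈ S) ∧
      (∀ f g : X →ᵇ ℝ, f ∈ S → g ∈ S → f * g ∈ S) ∧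
      (∀ (c : ℝ) (f : X →ᵇ ℝ), f ∈ S → c • f ∈ S) ∧
      IsClosed {x : ↥𝔅 | (x : X →ᵇ ℝ) ∈ S}}

/-- A signed quasi-linear functional on `𝔅` (QI1), (QI2). -/
structure SignedQLF {X : Type u} [TopologicalSpace X] (𝔅 : Set (X →ᵇ ℝ)) where
  toFun : (X →ᵇ ℝ) → ℝ
  smul_eq : ∀ (a : ℝ) (f : X →ᵇ ℝ), f ∈ 𝔅 → toFun (a • f) = a * toFun f
  add_eq : ∀ h ∈ 𝔅, ∀ f g : X →ᵇ ℝ, f ∈ sgen 𝔅 h → g ∈ sgen 𝔅 h →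
      toFun (f + g) = toFun f + toFun g

/-- A (positive) quasi-linear functional on `𝔅` (QI1)–(QI3). -/
structure QLF {X : Type u} [TopologicalSpace X] (𝔅 : Set (X →ᵇ ℝ)) extends SignedQLF 𝔅 where
  pos : ∀ f : X →ᵇ ℝ, f ∈ 𝔅 → 0 ≤ f → 0 ≤ toFun f

/-- `‖ρ‖ = sup {ρ(f) : f ∈ 𝔅, 0 ≤ f ≤ 1}`, as an extended real number. -/
noncomputable def qnorm {X : Type u} [TopologicalSpace X] {𝔅 : Set (X →ᵇ ℝ)} (ρ : QLF 𝔅) :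
    ℝ≥0∞ :=
  ⨆ f ∈ {f : X →ᵇ ℝ | f ∈ 𝔅 ∧ 0 ≤ f ∧ f ≤ 1}, ENNReal.ofReal (ρ.toFun f)

/-- `m` is the measure `m_f` on `ℝ` associated with a finite topological measure `μ` and
`f ∈ C₀(X)` (case (A)): `m(W) = μ(f⁻¹(W))` for every open `W ⊆ ℝ`. -/
def IsMfA {X : Type u} [TopologicalSpace X] (μ : TopMeasure X) (f : X →ᵇ ℝ)
    (m : Measure ℝ) : Prop :=
  ∀ W : Set ℝ, IsOpen W → m W = μ.toFun ((f : X → ℝ) ⁻¹' W)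

/-- `m` is the measure `m_f` on `ℝ` associated with a compact-finite topological measure `μ`
and `f ∈ C_c(X)` (case (B)): `m(W) = μ(f⁻¹(W \ {0}))` for every open `W ⊆ ℝ`. -/
def IsMfB {X : Type u} [TopologicalSpace X] (μ : TopMeasure X) (f : X →ᵇ ℝ)
    (m : Measure ℝ) : Prop :=
  ∀ W : Set ℝ, IsOpen W → m W = μ.toFun ((f : X → ℝ) ⁻¹' (W \ {0}))

/-- The support of a (Borel) measure on `ℝ`. -/
def msupp (m : Measure ℝ) : Set ℝ := {x : ℝ | ∀ U ∈ nhds x, 0 < m U}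

/-- The set function `μ_ρ` on open sets:
`μ_ρ(U) = sup {ρ(f) : f ∈ C_c(X), 0 ≤ f ≤ 1, supp f ⊆ U}`. -/
noncomputable def muO {X : Type u} [TopologicalSpace X] {𝔅 : Set (X →ᵇ ℝ)} (ρ : QLF 𝔅)
    (U : Set X) : ℝ≥0∞ :=
  ⨆ f ∈ {f : X →ᵇ ℝ | f ∈ CcS X ∧ 0 ≤ f ∧ f ≤ 1 ∧ tsupport (f : X → ℝ) ⊆ U},
    ENNReal.ofReal (ρ.toFun f)

/-- The set function `μ_ρ` on closed sets: `μ_ρ(F) = inf {μ_ρ(U) : U open, F ⊆ U}`. -/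
noncomputable def muC {X : Type u} [TopologicalSpace X] {𝔅 : Set (X →ᵇ ℝ)} (ρ : QLF 𝔅)
    (F : Set X) : ℝ≥0∞ :=
  ⨅ U ∈ {U : Set X | IsOpen U ∧ F ⊆ U}, muO ρ U

open Classical in
/-- The set function `μ_ρ`. -/
noncomputable def muR {X : Type u} [TopologicalSpace X] {𝔅 : Set (X →ᵇ ℝ)} (ρ : QLF 𝔅) :
    Set X → ℝ≥0∞ :=
  fun A => if IsOpen A then muO ρ A else muC ρ A

/-- `ρ = ρ_μ` on `C₀(X)` (case (A)): for every `f ∈ C₀(X)` and every measure `m_f`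
associated with `μ` and `f`, `ρ(f) = ∫_ℝ id dm_f`. -/
def ReprA {X : Type u} [TopologicalSpace X] {𝔅 : Set (X →ᵇ ℝ)} (μ : TopMeasure X)
    (ρ : QLF 𝔅) : Prop :=
  ∀ f ∈ C0S X, ∀ m : Measure ℝ, IsMfA μ f m → ρ.toFun f = ∫ t, t ∂m

/-- `ρ = ρ_μ` on `C_c(X)` (case (B)). -/
def ReprB {X : Type u} [TopologicalSpace X] {𝔅 : Set (X →ᵇ ℝ)} (μ : TopMeasure X)
    (ρ : QLF 𝔅) : Prop :=
  ∀ f ∈ CcS X, ∀ m : Measure ℝ, IsMfB μ f m → ρ.toFun f = ∫ t, t ∂m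

namespace MuRhoAux

open BoundedContinuousFunction Polynomial

variable {X : Type u} [TopologicalSpace X]

lemma bcf_nonneg_iff {f : X →ᵇ ℝ} : 0 ≤ f ↔ ∀ x, 0 ≤ f x := by
  constructor
  · intro h x; simpa using h x
  · intro h x; simpa using h x

lemma bcf_le_one_iff {f : X →ᵇ ℝ} : f ≤ 1 ↔ ∀ x, f x ≤ 1 := by
  constructor
  · intro h x; simpa using h x
  · intro h x; simpa using h x

lemma zero_mem_CcS : (0 : X →ᵇ ℝ) ∈ CcS X := by
  simp only [CcS, Set.mem_setOf_eq, BoundedContinuousFunction.coe_zero]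
  exact HasCompactSupport.zero

lemma hcs_of_support_subset {g : X → ℝ} {K : Set X} (hK : IsCompact K) (hKc : IsClosed K)
    (h : Function.support g ⊆ K) : HasCompactSupport g :=
  IsCompact.of_isClosed_subset hK isClosed_closure (closure_minimal h hKc)

lemma ccs_subset {𝔅 : Set (X →ᵇ ℝ)} (h𝔅 : 𝔅 = C0S X ∨ 𝔅 = CcS X) : CcS X ⊆ 𝔅 := by
  rcases h𝔅 with rfl | rfl
  · intro f hf
    simp only [C0S, Set.mem_setOf_eq]
    have h0 : ∀ᶠ x in cocompact X, f x = 0 := by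
      filter_upwards [mem_cocompact.mpr ⟨tsupport ⇑f, hf, subset_rfl⟩] with x hx
      exact image_eq_zero_of_notMem_tsupport hx
    exact Filter.Tendsto.congr' (h0.mono fun x hx => hx.symm) tendsto_const_nhds
  · exact subset_rfl

lemma isSubalgS_of {𝔅 : Set (X →ᵇ ℝ)} (h𝔅 : 𝔅 = C0S X ∨ 𝔅 = CcS X) : IsSubalgS 𝔅 := by
  rcases h𝔅 with rfl | rfl
  · refine ⟨fun f g hf hg => ?_, fun f g hf hg => ?_, fun c f hf => ?_⟩
    · simp only [C0S, Set.mem_setOf_eq, BoundedContinuousFunction.coe_add] at *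
      have h := hf.add hg; rw [add_zero] at h; exact h
    · simp only [C0S, Set.mem_setOf_eq, BoundedContinuousFunction.coe_mul] at *
      have h := hf.mul hg; rw [mul_zero] at h; exact h
    · simp only [C0S, Set.mem_setOf_eq, BoundedContinuousFunction.coe_smul] at *
      simpa using hf.const_smul c
  · refine ⟨fun f g hf hg => ?_, fun f g hf hg => ?_, fun c f hf => ?_⟩
    · simp only [CcS, Set.mem_setOf_eq, BoundedContinuousFunction.coe_add] at *
      exact hf.add hg
    · simp only [CcS, Set.mem_setOf_eq, BoundedContinuousFunction.coe_mul] at *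
      exact hf.mul_right
    · simp only [CcS, Set.mem_setOf_eq, BoundedContinuousFunction.coe_smul] at *
      exact hcs_of_support_subset hf (isClosed_tsupport _)
        ((Function.support_const_smul_subset c ⇑f).trans (subset_tsupport _))

lemma zero_mem {𝔅 : Set (X →ᵇ ℝ)} (h𝔅 : 𝔅 = C0S X ∨ 𝔅 = CcS X) : (0 : X →ᵇ ℝ) ∈ 𝔅 :=
  ccs_subset h𝔅 zero_mem_CcS

end MuRhoAux
namespace MuRhoAux

variable {X : Type u} [TopologicalSpace X]

noncomputable def evA (x : X) : (X →ᵇ ℝ) →ₐ[ℝ] ℝ where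
  toFun u := u x
  map_one' := by simp
  map_mul' u v := by simp
  map_zero' := by simp
  map_add' u v := by simp
  commutes' c := by simp [Algebra.algebraMap_eq_smul_one]

lemma aeval_apply (h : X →ᵇ ℝ) (p : (Polynomial ℝ)) (x : X) :
    (Polynomial.aeval h p) x = p.eval (h x) := by
  have h1 : (Polynomial.aeval h p) x = (evA x) (Polynomial.aeval h p) := rfl
  rw [h1, ← Polynomial.aeval_algHom_apply (evA x) h p]
  have h2 : (evA x) h = h x := rfl
  rw [h2, ← Polynomial.coe_aeval_eq_eval]

lemma pow_mem {S : Set (X →ᵇ ℝ)} (hmul : ∀ f g : X →ᵇ ℝ, f ∈ S → g ∈ S → f * g ∈ S)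
    {h : X →ᵇ ℝ} (hh : h ∈ S) : ∀ n : ℕ, h ^ (n + 1) ∈ S := by
  intro n
  induction n with
  | zero => simpa using hh
  | succ k ih => rw [pow_succ]; exact hmul _ _ ih hh

lemma mul_aeval_mem {S : Set (X →ᵇ ℝ)}
    (hadd : ∀ f g : X →ᵇ ℝ, f ∈ S → g ∈ S → f + g ∈ S)
    (hmul : ∀ f g : X →ᵇ ℝ, f ∈ S → g ∈ S → f * g ∈ S)
    (hsmul : ∀ (c : ℝ) (f : X →ᵇ ℝ), f ∈ S → c • f ∈ S)
    (h : X →ᵇ ℝ) (hh : h ∈ S) (r : (Polynomial ℝ)) : h * Polynomial.aeval h r ∈ S := by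
  induction r using Polynomial.induction_on with
  | C a =>
      have he : h * (Polynomial.aeval h) (Polynomial.C a) = a • h := by
        ext x
        rw [Polynomial.aeval_C]
        simp [Algebra.algebraMap_eq_smul_one, mul_comm]
      rw [he]; exact hsmul a h hh
  | add p q hp hq =>
      rw [map_add, mul_add]; exact hadd _ _ hp hq
  | monomial n a _ =>
      have he : h * (Polynomial.aeval h) (Polynomial.C a * Polynomial.X ^ (n + 1))
          = a • (h ^ (n + 2)) := by
        ext x
        rw [map_mul, Polynomial.aeval_C, map_pow, Polynomial.aeval_X]
        simp only [BoundedContinuousFunction.coe_mul, BoundedContinuousFunction.coe_smul,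
          BoundedContinuousFunction.coe_pow, Algebra.algebraMap_eq_smul_one,
          BoundedContinuousFunction.coe_one, Pi.mul_apply, Pi.smul_apply, Pi.pow_apply,
          Pi.one_apply, smul_eq_mul]
        ring
      rw [he]; exact hsmul a _ (pow_mem hmul hh (n + 1))

lemma polyApprox (M : ℝ) (hM : 0 ≤ M) (ψ : ℝ → ℝ) (hψ : Continuous ψ) (hψ0 : ψ 0 = 0)
    {ε : ℝ} (hε : 0 < ε) :
    ∃ p : (Polynomial ℝ), p.coeff 0 = 0 ∧ ∀ t ∈ Set.Icc (-M) M, |ψ t - p.eval t| < ε := by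
  have h0m : (0 : ℝ) ∈ Set.Icc (-M) M := ⟨neg_nonpos.mpr hM, hM⟩
  haveI : Nonempty (Set.Icc (-M) M) := ⟨⟨0, h0m⟩⟩
  set ψc : C(Set.Icc (-M) M, ℝ) := ⟨fun t => ψ t, hψ.comp continuous_subtype_val⟩ with hψc
  have hmem : ψc ∈ closure ((polynomialFunctions (Set.Icc (-M) M)) : Set C(Set.Icc (-M) M, ℝ)) := by
    rw [← Subalgebra.topologicalClosure_coe, polynomialFunctions_closure_eq_top]
    simp
  obtain ⟨q, hq, hdist⟩ := Metric.mem_closure_iff.mp hmem (ε / 2) (by positivity)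
  rw [polynomialFunctions_coe] at hq
  obtain ⟨p, rfl⟩ := hq
  have hpt : ∀ t (ht : t ∈ Set.Icc (-M) M), |ψ t - p.eval t| < ε / 2 := by
    intro t ht
    have h3 := ContinuousMap.dist_apply_le_dist (f := ψc)
      (g := Polynomial.toContinuousMapOnAlgHom (Set.Icc (-M) M) p) ⟨t, ht⟩
    have h4 : dist (ψ t) (p.eval t) ≤ dist ψc (Polynomial.toContinuousMapOnAlgHom (Set.Icc (-M) M) p) := by
      simpa [hψc] using h3
    calc |ψ t - p.eval t| = dist (ψ t) (p.eval t) := (Real.dist_eq _ _).symm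
      _ ≤ _ := h4
      _ < ε / 2 := hdist
  refine ⟨p - Polynomial.C (p.coeff 0), by simp, ?_⟩
  intro t ht
  have h5 := hpt t ht
  have h6 := hpt 0 h0m
  rw [hψ0] at h6
  have h7 : |p.eval 0| < ε / 2 := by simpa using h6
  have h8 : p.coeff 0 = p.eval 0 := Polynomial.coeff_zero_eq_eval_zero p
  rw [Polynomial.eval_sub, Polynomial.eval_C, h8]
  calc |ψ t - (p.eval t - p.eval 0)| = |(ψ t - p.eval t) + p.eval 0| := by ring_nf
    _ ≤ |ψ t - p.eval t| + |p.eval 0| := abs_add_le _ _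
    _ < ε / 2 + ε / 2 := add_lt_add h5 h7
    _ = ε := by ring

end MuRhoAux
namespace MuRhoAux

variable {X : Type u} [TopologicalSpace X]

lemma comp_mem_sgen {𝔅 : Set (X →ᵇ ℝ)} (h : X →ᵇ ℝ)
    (ψ : ℝ → ℝ) (hψ : Continuous ψ) (hψ0 : ψ 0 = 0)
    (w : X →ᵇ ℝ) (hw : ∀ x, w x = ψ (h x)) (hw𝔅 : w ∈ 𝔅) :
    w ∈ sgen 𝔅 h := by
  rw [sgen, Set.mem_sInter]
  rintro S ⟨hSsub, hhS, hadd, hmul, hsmul, hclosed⟩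
  have key : ∀ n : ℕ, ∃ u : X →ᵇ ℝ, u ∈ S ∧ ‖u - w‖ ≤ 1 / (n + 1) := by
    intro n
    obtain ⟨p, hp0, hp⟩ := polyApprox ‖h‖ (norm_nonneg h) ψ hψ hψ0
      (ε := 1 / (n + 1)) (by positivity)
    obtain ⟨r, hr⟩ := Polynomial.X_dvd_iff.mpr hp0
    refine ⟨Polynomial.aeval h p, ?_, ?_⟩
    · rw [hr, map_mul, Polynomial.aeval_X]
      exact mul_aeval_mem hadd hmul hsmul h hhS r
    · refine (BoundedContinuousFunction.norm_le (by positivity)).mpr fun x => ?_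
      have hx : h x ∈ Set.Icc (-‖h‖) ‖h‖ := by
        have h1 := BoundedContinuousFunction.norm_coe_le_norm h x
        rw [Real.norm_eq_abs] at h1
        exact abs_le.mp h1
      have h2 := (hp (h x) hx).le
      rw [BoundedContinuousFunction.sub_apply, aeval_apply, hw, Real.norm_eq_abs,
        abs_sub_comm]
      exact h2
  choose u huS hun using key
  have hu𝔅 : ∀ n, u n ∈ 𝔅 := fun n => hSsub (huS n)
  have htend : Filter.Tendsto (fun n => (⟨u n, hu𝔅 n⟩ : ↥𝔅)) Filter.atTop (nhds ⟨w, hw𝔅⟩) := by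
    rw [tendsto_subtype_rng]
    rw [tendsto_iff_dist_tendsto_zero]
    refine squeeze_zero (fun n => dist_nonneg) (fun n => ?_)
      tendsto_one_div_add_atTop_nhds_zero_nat
    rw [dist_eq_norm]
    exact hun n
  exact hclosed.mem_of_tendsto htend (Filter.Eventually.of_forall fun n => huS n)

lemma sgen_self {𝔅 : Set (X →ᵇ ℝ)} (h : X →ᵇ ℝ) : h ∈ sgen 𝔅 h := by
  rw [sgen, Set.mem_sInter]; rintro S ⟨-, hh, -⟩; exact hh

lemma sgen_add {𝔅 : Set (X →ᵇ ℝ)} {h f g : X →ᵇ ℝ}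
    (hf : f ∈ sgen 𝔅 h) (hg : g ∈ sgen 𝔅 h) : f + g ∈ sgen 𝔅 h := by
  rw [sgen, Set.mem_sInter] at *
  rintro S hS
  exact hS.2.2.1 f g (hf S hS) (hg S hS)

lemma sgen_smul {𝔅 : Set (X →ᵇ ℝ)} {h f : X →ᵇ ℝ} (c : ℝ)
    (hf : f ∈ sgen 𝔅 h) : c • f ∈ sgen 𝔅 h := by
  rw [sgen, Set.mem_sInter] at *
  rintro S hS
  exact hS.2.2.2.2.1 c f (hf S hS)

lemma sgen_subset {𝔅 : Set (X →ᵇ ℝ)} (hsub : IsSubalgS 𝔅) {h : X →ᵇ ℝ} (hh : h ∈ 𝔅) :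
    sgen 𝔅 h ⊆ 𝔅 := by
  intro f hf
  rw [sgen, Set.mem_sInter] at hf
  refine hf 𝔅 ⟨subset_rfl, hh, hsub.1, hsub.2.1, hsub.2.2, ?_⟩
  have he : {x : ↥𝔅 | (x : X →ᵇ ℝ) ∈ 𝔅} = Set.univ := Set.eq_univ_of_forall fun x => x.2
  rw [he]; exact isClosed_univ

/-- The key pair lemma: if `v = 1` on the support of `u`, then `u`, `v` and `v - u` all lie
in the singly generated subalgebra `B(u + v)`, whence `ρ(v) = ρ(u) + ρ(v - u)`. -/
lemma key_split {𝔅 : Set (X →ᵇ ℝ)} (h𝔅 : 𝔅 = C0S X ∨ 𝔅 = CcS X) (ρ : QLF 𝔅)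
    {u v : X →ᵇ ℝ} (hu : u ∈ CcS X) (hv : v ∈ CcS X)
    (hu0 : 0 ≤ u) (hu1 : u ≤ 1) (hv0 : 0 ≤ v) (hv1 : v ≤ 1)
    (h1 : ∀ x, u x ≠ 0 → v x = 1) :
    ρ.toFun v = ρ.toFun u + ρ.toFun (v - u) ∧ 0 ≤ ρ.toFun u ∧ 0 ≤ ρ.toFun (v - u) := by
  have hsub := isSubalgS_of h𝔅
  have hcc := ccs_subset h𝔅
  have hu𝔅 : u ∈ 𝔅 := hcc hu
  have hv𝔅 : v ∈ 𝔅 := hcc hv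
  have hs𝔅 : u + v ∈ 𝔅 := hsub.1 _ _ hu𝔅 hv𝔅
  have husgen : u ∈ sgen 𝔅 (u + v) := by
    refine comp_mem_sgen (u + v) (fun t => max (t - 1) 0)
      (by continuity) (by norm_num) u (fun x => ?_) hu𝔅
    rw [BoundedContinuousFunction.add_apply]
    by_cases hx : u x = 0
    · rw [hx, zero_add]
      have : v x ≤ 1 := by simpa using hv1 x
      simp [max_eq_right, sub_nonpos.mpr this]
    · rw [h1 x hx]
      have : 0 ≤ u x := by simpa using hu0 x
      simp [max_eq_left, this]
  have hvusgen : v - u ∈ sgen 𝔅 (u + v) := by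
    have he : v - u = (u + v) + (-2 : ℝ) • u := by
      ext x
      simp only [BoundedContinuousFunction.sub_apply, BoundedContinuousFunction.add_apply,
        BoundedContinuousFunction.coe_smul, Pi.smul_apply, smul_eq_mul]
      ring
    rw [he]
    exact sgen_add (sgen_self _) (sgen_smul _ husgen)
  have hadd := ρ.add_eq (u + v) hs𝔅 u (v - u) husgen hvusgen
  have he2 : u + (v - u) = v := by ring
  rw [he2] at hadd
  have hvu0 : 0 ≤ v - u := by
    rw [bcf_nonneg_iff]
    intro x
    rw [BoundedContinuousFunction.sub_apply, sub_nonneg]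
    by_cases hx : u x = 0
    · rw [hx]; simpa using hv0 x
    · rw [h1 x hx]; simpa using hu1 x
  refine ⟨hadd, ρ.pos u hu𝔅 hu0, ρ.pos (v - u) (sgen_subset hsub hs𝔅 hvusgen) hvu0⟩

/-- Additivity on functions with disjoint supports. -/
lemma disj_add {𝔅 : Set (X →ᵇ ℝ)} (h𝔅 : 𝔅 = C0S X ∨ 𝔅 = CcS X) (ρ : QLF 𝔅)
    {u v : X →ᵇ ℝ} (hu : u ∈ CcS X) (hv : v ∈ CcS X)
    (hu0 : 0 ≤ u) (hv0 : 0 ≤ v) (hdisj : ∀ x, u x = 0 ∨ v x = 0) :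
    ρ.toFun (u + v) = ρ.toFun u + ρ.toFun v := by
  have hcc := ccs_subset h𝔅
  have hK : IsCompact (tsupport ⇑u ∪ tsupport ⇑v) := hu.union hv
  have hKc : IsClosed (tsupport ⇑u ∪ tsupport ⇑v) :=
    (isClosed_tsupport _).union (isClosed_tsupport _)
  have hsupp : Function.support ⇑(u - v) ⊆ tsupport ⇑u ∪ tsupport ⇑v := by
    intro x hx
    have hne : (u - v) x ≠ 0 := hx
    by_contra hcon
    rw [Set.mem_union] at hcon
    push_neg at hcon
    refine hne ?_
    rw [BoundedContinuousFunction.sub_apply, image_eq_zero_of_notMem_tsupport hcon.1,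
      image_eq_zero_of_notMem_tsupport hcon.2, sub_zero]
  have hvu : u - v ∈ CcS X := hcs_of_support_subset hK hKc hsupp
  have hu0' : ∀ x, 0 ≤ u x := fun x => by simpa using hu0 x
  have hv0' : ∀ x, 0 ≤ v x := fun x => by simpa using hv0 x
  have husgen : u ∈ sgen 𝔅 (u - v) := by
    refine comp_mem_sgen (u - v) (fun t => max t 0) (by continuity) (by norm_num) u
      (fun x => ?_) (hcc hu)
    show u x = max ((u - v) x) 0
    rw [BoundedContinuousFunction.sub_apply]
    rcases hdisj x with h | h
    · rw [h, zero_sub]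
      exact (max_eq_right (neg_nonpos.mpr (hv0' x))).symm
    · rw [h, sub_zero]
      exact (max_eq_left (hu0' x)).symm
  have hvsgen : v ∈ sgen 𝔅 (u - v) := by
    refine comp_mem_sgen (u - v) (fun t => max (-t) 0) (by continuity) (by norm_num) v
      (fun x => ?_) (hcc hv)
    show v x = max (-((u - v) x)) 0
    rw [BoundedContinuousFunction.sub_apply]
    rcases hdisj x with h | h
    · rw [h, zero_sub, neg_neg]
      exact (max_eq_left (hv0' x)).symm
    · rw [h, sub_zero]
      exact (max_eq_right (neg_nonpos.mpr (hu0' x))).symm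
  exact ρ.add_eq (u - v) (hcc hvu) u v husgen hvsgen

end MuRhoAux
namespace MuRhoAux

variable {X : Type u} [TopologicalSpace X]

/-- Admissible functions for an open set. -/
def Adm (U : Set X) : Set (X →ᵇ ℝ) :=
  {f : X →ᵇ ℝ | f ∈ CcS X ∧ 0 ≤ f ∧ f ≤ 1 ∧ tsupport (f : X → ℝ) ⊆ U}

lemma mem_adm_iff {U : Set X} {f : X →ᵇ ℝ} :
    f ∈ Adm U ↔ f ∈ CcS X ∧ 0 ≤ f ∧ f ≤ 1 ∧ tsupport (f : X → ℝ) ⊆ U := Iff.rfl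

lemma muO_eq {𝔅 : Set (X →ᵇ ℝ)} (ρ : QLF 𝔅) (U : Set X) :
    muO ρ U = ⨆ f ∈ Adm U, ENNReal.ofReal (ρ.toFun f) := rfl

lemma adm_zero (U : Set X) : (0 : X →ᵇ ℝ) ∈ Adm U := by
  rw [mem_adm_iff]
  refine ⟨zero_mem_CcS, le_rfl, ?_, ?_⟩
  · rw [bcf_le_one_iff]; intro x; simp
  · have : tsupport ((0 : X →ᵇ ℝ) : X → ℝ) = ∅ := by
      rw [BoundedContinuousFunction.coe_zero, tsupport_eq_empty_iff]
    rw [this]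
    exact Set.empty_subset _

lemma rho_zero {𝔅 : Set (X →ᵇ ℝ)} (h𝔅 : 𝔅 = C0S X ∨ 𝔅 = CcS X) (ρ : QLF 𝔅) :
    ρ.toFun 0 = 0 := by
  have := ρ.smul_eq 0 0 (zero_mem h𝔅)
  simpa using this

lemma le_muO {𝔅 : Set (X →ᵇ ℝ)} (ρ : QLF 𝔅) {U : Set X} {f : X →ᵇ ℝ} (hf : f ∈ Adm U) :
    ENNReal.ofReal (ρ.toFun f) ≤ muO ρ U := by
  rw [muO_eq]
  exact le_iSup₂ (f := fun g (_ : g ∈ Adm U) => ENNReal.ofReal (ρ.toFun g)) f hf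

lemma muO_mono {𝔅 : Set (X →ᵇ ℝ)} (ρ : QLF 𝔅) {U V : Set X} (h : U ⊆ V) :
    muO ρ U ≤ muO ρ V := by
  rw [muO_eq, muO_eq]
  refine iSup₂_le fun f hf => ?_
  rw [mem_adm_iff] at hf
  exact le_iSup₂ (f := fun g (_ : g ∈ Adm V) => ENNReal.ofReal (ρ.toFun g)) f
    (mem_adm_iff.mpr ⟨hf.1, hf.2.1, hf.2.2.1, hf.2.2.2.trans h⟩)

lemma muC_le_muO {𝔅 : Set (X →ᵇ ℝ)} (ρ : QLF 𝔅) {K U : Set X} (hU : IsOpen U) (hKU : K ⊆ U) :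
    muC ρ K ≤ muO ρ U :=
  biInf_le _ ⟨hU, hKU⟩

lemma muC_mono {𝔅 : Set (X →ᵇ ℝ)} (ρ : QLF 𝔅) {K L : Set X} (h : K ⊆ L) :
    muC ρ K ≤ muC ρ L :=
  le_iInf₂ fun U hU => biInf_le _ ⟨hU.1, h.trans hU.2⟩

/-- Urysohn-type lemma: a `[0,1]`-valued compactly supported bounded continuous function
which is `1` on an open neighbourhood of `K` and supported inside `U`. -/
lemma urysohn [LocallyCompactSpace X] [T2Space X] {K U : Set X}
    (hK : IsCompact K) (hU : IsOpen U) (hKU : K ⊆ U) :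
    ∃ (φ : X →ᵇ ℝ) (N : Set X), φ ∈ CcS X ∧ 0 ≤ φ ∧ φ ≤ 1 ∧ tsupport (φ : X → ℝ) ⊆ U ∧
      IsOpen N ∧ K ⊆ N ∧ ∀ x ∈ N, φ x = 1 := by
  obtain ⟨L2, hL2c, hKL2, hL2U⟩ := exists_compact_between hK hU hKU
  obtain ⟨L1, hL1c, hKL1, hL1L2⟩ := exists_compact_between hK isOpen_interior hKL2
  have hclc : IsCompact (closure (interior L2)) :=
    IsCompact.of_isClosed_subset hL2c isClosed_closure
      (closure_minimal interior_subset hL2c.isClosed)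
  obtain ⟨f, hfsupp, hf1, hficc⟩ :=
    exists_tsupport_one_of_isOpen_isClosed isOpen_interior hclc hL1c.isClosed hL1L2
  have hb : ∀ x y : X, dist (f x) (f y) ≤ 1 := by
    intro x y
    have h1 := hficc x
    have h2 := hficc y
    rw [Real.dist_eq, abs_sub_le_iff]
    constructor <;> [linarith [h1.1, h1.2, h2.1, h2.2]; linarith [h1.1, h1.2, h2.1, h2.2]]
  refine ⟨⟨f, 1, hb⟩, interior L1, ?_, ?_, ?_, ?_, isOpen_interior, hKL1, ?_⟩
  · show HasCompactSupport _
    have : tsupport ⇑f ⊆ L2 := hfsupp.trans interior_subset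
    exact IsCompact.of_isClosed_subset hL2c (isClosed_tsupport _) this
  · rw [bcf_nonneg_iff]; intro x; exact (hficc x).1
  · rw [bcf_le_one_iff]; intro x; exact (hficc x).2
  · exact hfsupp.trans (interior_subset.trans hL2U)
  · intro x hx
    exact hf1 (interior_subset hx)

end MuRhoAux
namespace MuRhoAux

variable {X : Type u} [TopologicalSpace X]

lemma mem_ccs_iff {f : X →ᵇ ℝ} : f ∈ CcS X ↔ HasCompactSupport (f : X → ℝ) := Iff.rfl

/-- Subadditivity of `μ_ρ` over a disjoint union of two open sets. -/
lemma split_le [LocallyCompactSpace X] [T2Space X] {𝔅 : Set (X →ᵇ ℝ)}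
    (h𝔅 : 𝔅 = C0S X ∨ 𝔅 = CcS X) (ρ : QLF 𝔅) {V W : Set X}
    (hV : IsOpen V) (hW : IsOpen W) (hVW : Disjoint V W) :
    muO ρ (V ∪ W) ≤ muO ρ V + muO ρ W := by
  rw [muO_eq]
  refine iSup₂_le fun f hf => ?_
  rw [mem_adm_iff] at hf
  obtain ⟨hfc, hf0, hf1, hfsupp⟩ := hf
  rw [mem_ccs_iff] at hfc
  have hf0' : ∀ x, 0 ≤ f x := fun x => by simpa using hf0 x
  have hf1' : ∀ x, f x ≤ 1 := fun x => by simpa using hf1 x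
  have hK1 : IsCompact (tsupport (f : X → ℝ) \ W) := hfc.diff hW
  have hK1V : tsupport (f : X → ℝ) \ W ⊆ V := fun x hx => (hfsupp hx.1).resolve_right hx.2
  obtain ⟨φ, N, hφc, hφ0, hφ1, hφsupp, hNo, hK1N, hφ1N⟩ := urysohn hK1 hV hK1V
  rw [mem_ccs_iff] at hφc
  have hφ0' : ∀ x, 0 ≤ φ x := fun x => by simpa using hφ0 x
  have hφ1' : ∀ x, φ x ≤ 1 := fun x => by simpa using hφ1 x
  set f₁ := f * φ with hf₁def
  set f₂ := f - f * φ with hf₂def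
  have hf₁x : ∀ x, f₁ x = f x * φ x := fun x => rfl
  have hf₂x : ∀ x, f₂ x = f x - f x * φ x := fun x => rfl
  -- support of f₂
  have hf₂supp : Function.support (f₂ : X → ℝ) ⊆ tsupport (f : X → ℝ) \ N := by
    intro x hx
    have hne : f₂ x ≠ 0 := hx
    constructor
    · apply subset_tsupport
      intro h0
      exact hne (by rw [hf₂x, h0]; ring)
    · intro hN
      exact hne (by rw [hf₂x, hφ1N x hN]; ring)
  have hDc : IsClosed (tsupport (f : X → ℝ) \ N) := (isClosed_tsupport _).sdiff hNo
  have hDW : tsupport (f : X → ℝ) \ N ⊆ W := by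
    intro x hx
    by_contra hxW
    exact hx.2 (hK1N ⟨hx.1, hxW⟩)
  have hf₂c : HasCompactSupport (f₂ : X → ℝ) :=
    hcs_of_support_subset (hfc.diff hNo) hDc hf₂supp
  have hf₂tsupp : tsupport (f₂ : X → ℝ) ⊆ W := (closure_minimal hf₂supp hDc).trans hDW
  have hf₁c : HasCompactSupport (f₁ : X → ℝ) := by
    rw [hf₁def, BoundedContinuousFunction.coe_mul]
    exact hfc.mul_right
  have hf₁tsupp : tsupport (f₁ : X → ℝ) ⊆ V := by
    have hsub : Function.support (f₁ : X → ℝ) ⊆ tsupport (φ : X → ℝ) := by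
      intro x hx
      apply subset_tsupport
      intro h0
      exact hx (by rw [hf₁x, h0]; ring)
    exact (closure_minimal hsub (isClosed_tsupport _)).trans hφsupp
  have hf₁0 : 0 ≤ f₁ := by
    rw [bcf_nonneg_iff]
    intro x
    rw [hf₁x]
    exact mul_nonneg (hf0' x) (hφ0' x)
  have hf₂0 : 0 ≤ f₂ := by
    rw [bcf_nonneg_iff]
    intro x
    rw [hf₂x]
    nlinarith [hf0' x, hf1' x, hφ0' x, hφ1' x]
  have hf₁1 : f₁ ≤ 1 := by
    rw [bcf_le_one_iff]
    intro x
    rw [hf₁x]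
    nlinarith [hf0' x, hf1' x, hφ0' x, hφ1' x]
  have hf₂1 : f₂ ≤ 1 := by
    rw [bcf_le_one_iff]
    intro x
    rw [hf₂x]
    nlinarith [hf0' x, hf1' x, hφ0' x, hφ1' x]
  have hf₁adm : f₁ ∈ Adm V := mem_adm_iff.mpr ⟨mem_ccs_iff.mpr hf₁c, hf₁0, hf₁1, hf₁tsupp⟩
  have hf₂adm : f₂ ∈ Adm W := mem_adm_iff.mpr ⟨mem_ccs_iff.mpr hf₂c, hf₂0, hf₂1, hf₂tsupp⟩
  have hdisj : ∀ x, f₁ x = 0 ∨ f₂ x = 0 := by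
    intro x
    by_contra hcon
    push_neg at hcon
    have hxV : x ∈ V := by
      refine hf₁tsupp (subset_tsupport _ ?_)
      exact hcon.1
    have hxW : x ∈ W := hf₂tsupp (subset_tsupport _ hcon.2)
    exact Set.disjoint_left.mp hVW hxV hxW
  have hsum : f₁ + f₂ = f := by rw [hf₁def, hf₂def]; ring
  have hadd := disj_add h𝔅 ρ (mem_ccs_iff.mpr hf₁c) (mem_ccs_iff.mpr hf₂c) hf₁0 hf₂0 hdisj
  rw [hsum] at hadd
  calc ENNReal.ofReal (ρ.toFun f)
      = ENNReal.ofReal (ρ.toFun f₁) + ENNReal.ofReal (ρ.toFun f₂) := by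
        rw [hadd, ENNReal.ofReal_add (ρ.pos f₁ (ccs_subset h𝔅 (mem_ccs_iff.mpr hf₁c)) hf₁0)
          (ρ.pos f₂ (ccs_subset h𝔅 (mem_ccs_iff.mpr hf₂c)) hf₂0)]
    _ ≤ muO ρ V + muO ρ W := add_le_add (le_muO ρ hf₁adm) (le_muO ρ hf₂adm)

end MuRhoAux
namespace MuRhoAux

variable {X : Type u} [TopologicalSpace X]

/-- The key inequality `μ_ρ(U) ≤ μ_ρ(K) + μ_ρ(U \ K)`. -/
lemma crux [LocallyCompactSpace X] [T2Space X] {𝔅 : Set (X →ᵇ ℝ)}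
    (h𝔅 : 𝔅 = C0S X ∨ 𝔅 = CcS X) (ρ : QLF 𝔅) {K U : Set X}
    (hK : IsCompact K) (hU : IsOpen U) (hKU : K ⊆ U) :
    muO ρ U ≤ muC ρ K + muO ρ (U \ K) := by
  rw [muO_eq]
  refine iSup₂_le fun f hf => ?_
  have hmain : ∀ V ∈ {V : Set X | IsOpen V ∧ K ⊆ V},
      ENNReal.ofReal (ρ.toFun f) ≤ muO ρ V + muO ρ (U \ K) := by
    rintro V ⟨hVo, hKV⟩
    obtain ⟨hfcc, hf0, hf1, hfsupp⟩ := mem_adm_iff.mp hf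
    have hfc : HasCompactSupport (f : X → ℝ) := hfcc
    have hFc : IsCompact (tsupport (f : X → ℝ) ∪ K) := hfc.union hK
    have hFU : tsupport (f : X → ℝ) ∪ K ⊆ U := Set.union_subset hfsupp hKU
    obtain ⟨g, N₁, hgcc, hg0, hg1, hgsupp, hN₁o, hFN₁, hg1N⟩ := urysohn hFc hU hFU
    obtain ⟨φ, N₂, hφcc, hφ0, hφ1, hφsupp, hN₂o, hKN₂, hφ1N⟩ :=
      urysohn hK (hN₁o.inter hVo)
        (Set.subset_inter (fun x hx => hFN₁ (Or.inr hx)) hKV)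
    have hφ0' : ∀ x, 0 ≤ φ x := fun x => by simpa using hφ0 x
    have hg0' : ∀ x, 0 ≤ g x := fun x => by simpa using hg0 x
    have hg1' : ∀ x, g x ≤ 1 := fun x => by simpa using hg1 x
    -- g is 1 on the support of f
    have h1f : ∀ x, f x ≠ 0 → g x = 1 := fun x hx =>
      hg1N x (hFN₁ (Or.inl (subset_tsupport _ hx)))
    -- g is 1 on the support of φ
    have h1φ : ∀ x, φ x ≠ 0 → g x = 1 := fun x hx =>
      hg1N x (hφsupp (subset_tsupport _ hx)).1
    have hks1 := key_split h𝔅 ρ hfcc hgcc hf0 hf1 hg0 hg1 h1f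
    have hfg : ρ.toFun f ≤ ρ.toFun g := by
      obtain ⟨he, hp1, hp2⟩ := hks1
      linarith
    have hks2 := key_split h𝔅 ρ hφcc hgcc hφ0 hφ1 hg0 hg1 h1φ
    -- g - φ is admissible for U \ K
    have hgφsupp : Function.support ((g - φ : X →ᵇ ℝ) : X → ℝ) ⊆
        tsupport (g : X → ℝ) \ N₂ := by
      intro x hx
      have hne : g x - φ x ≠ 0 := by
        simpa [BoundedContinuousFunction.sub_apply] using hx
      constructor
      · apply subset_tsupport
        intro h0
        by_cases hφx : φ x = 0
        · exact hne (by rw [h0, hφx, sub_zero])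
        · have hgx := h1φ x hφx
          rw [h0] at hgx
          norm_num at hgx
      · intro hN₂
        have hφx : φ x = 1 := hφ1N x hN₂
        have hgx : g x = 1 := h1φ x (by rw [hφx]; norm_num)
        exact hne (by rw [hφx, hgx, sub_self])
    have hDc : IsClosed (tsupport (g : X → ℝ) \ N₂) := (isClosed_tsupport _).sdiff hN₂o
    have hDsub : tsupport (g : X → ℝ) \ N₂ ⊆ U \ K := fun x hx =>
      ⟨hgsupp hx.1, fun hxK => hx.2 (hKN₂ hxK)⟩
    have hgc : HasCompactSupport (g : X → ℝ) := hgcc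
    have hgφc : HasCompactSupport ((g - φ : X →ᵇ ℝ) : X → ℝ) :=
      hcs_of_support_subset (hgc.diff hN₂o) hDc hgφsupp
    have hgφtsupp : tsupport ((g - φ : X →ᵇ ℝ) : X → ℝ) ⊆ U \ K :=
      (closure_minimal hgφsupp hDc).trans hDsub
    have hgφ0 : 0 ≤ g - φ := by
      rw [bcf_nonneg_iff]
      intro x
      rw [BoundedContinuousFunction.sub_apply, sub_nonneg]
      by_cases hφx : φ x = 0
      · rw [hφx]; exact hg0' x
      · rw [h1φ x hφx]; simpa using hφ1 x
    have hgφ1 : g - φ ≤ 1 := by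
      rw [bcf_le_one_iff]
      intro x
      rw [BoundedContinuousFunction.sub_apply]
      have := hφ0' x
      have := hg1' x
      linarith
    have hgφadm : g - φ ∈ Adm (U \ K) :=
      mem_adm_iff.mpr ⟨mem_ccs_iff.mpr hgφc, hgφ0, hgφ1, hgφtsupp⟩
    have hφadm : φ ∈ Adm V :=
      mem_adm_iff.mpr ⟨hφcc, hφ0, hφ1, fun x hx => (hφsupp hx).2⟩
    calc ENNReal.ofReal (ρ.toFun f) ≤ ENNReal.ofReal (ρ.toFun g) :=
          ENNReal.ofReal_le_ofReal hfg
      _ = ENNReal.ofReal (ρ.toFun φ) + ENNReal.ofReal (ρ.toFun (g - φ)) := by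
          rw [hks2.1, ENNReal.ofReal_add hks2.2.1 hks2.2.2]
      _ ≤ muO ρ V + muO ρ (U \ K) := add_le_add (le_muO ρ hφadm) (le_muO ρ hgφadm)
  calc ENNReal.ofReal (ρ.toFun f)
      ≤ ⨅ V ∈ {V : Set X | IsOpen V ∧ K ⊆ V}, (muO ρ V + muO ρ (U \ K)) := le_iInf₂ hmain
    _ = muC ρ K + muO ρ (U \ K) := by
        rw [muC]
        simp_rw [ENNReal.iInf_add]

end MuRhoAux
namespace MuRhoAux

variable {X : Type u} [TopologicalSpace X]

/-- Two admissible functions supported in disjoint open-ish regions add up below `μ_ρ(U)`. -/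
lemma pair_le_muO {𝔅 : Set (X →ᵇ ℝ)} (h𝔅 : 𝔅 = C0S X ∨ 𝔅 = CcS X) (ρ : QLF 𝔅)
    {U V W : Set X} (hVU : V ⊆ U) (hWU : W ⊆ U) (hVW : Disjoint V W)
    {f g : X →ᵇ ℝ} (hf : f ∈ Adm V) (hg : g ∈ Adm W) :
    ENNReal.ofReal (ρ.toFun f) + ENNReal.ofReal (ρ.toFun g) ≤ muO ρ U := by
  obtain ⟨hfcc, hf0, hf1, hfsupp⟩ := mem_adm_iff.mp hf
  obtain ⟨hgcc, hg0, hg1, hgsupp⟩ := mem_adm_iff.mp hg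
  have hdisj : ∀ x, f x = 0 ∨ g x = 0 := by
    intro x
    by_contra hcon
    push_neg at hcon
    exact Set.disjoint_left.mp hVW (hfsupp (subset_tsupport _ hcon.1))
      (hgsupp (subset_tsupport _ hcon.2))
  have hsumc : HasCompactSupport ((f + g : X →ᵇ ℝ) : X → ℝ) := by
    rw [BoundedContinuousFunction.coe_add]
    exact HasCompactSupport.add hfcc hgcc
  have hsum0 : 0 ≤ f + g := by
    rw [bcf_nonneg_iff]
    intro x
    rw [BoundedContinuousFunction.add_apply]
    have h1 : 0 ≤ f x := by simpa using hf0 x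
    have h2 : 0 ≤ g x := by simpa using hg0 x
    linarith
  have hsum1 : f + g ≤ 1 := by
    rw [bcf_le_one_iff]
    intro x
    rw [BoundedContinuousFunction.add_apply]
    have h1 : f x ≤ 1 := by simpa using hf1 x
    have h2 : g x ≤ 1 := by simpa using hg1 x
    have h3 : 0 ≤ f x := by simpa using hf0 x
    have h4 : 0 ≤ g x := by simpa using hg0 x
    rcases hdisj x with h | h <;> rw [h] <;> linarith
  have hsumsupp : tsupport ((f + g : X →ᵇ ℝ) : X → ℝ) ⊆ U := by
    have h1 : Function.support ((f + g : X →ᵇ ℝ) : X → ℝ) ⊆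
        tsupport (f : X → ℝ) ∪ tsupport (g : X → ℝ) := by
      rw [BoundedContinuousFunction.coe_add]
      exact (Function.support_add _ _).trans
        (Set.union_subset_union (subset_tsupport _) (subset_tsupport _))
    have h2 : IsClosed (tsupport (f : X → ℝ) ∪ tsupport (g : X → ℝ)) :=
      (isClosed_tsupport _).union (isClosed_tsupport _)
    exact (closure_minimal h1 h2).trans
      (Set.union_subset (hfsupp.trans hVU) (hgsupp.trans hWU))
  have hadm : f + g ∈ Adm U := mem_adm_iff.mpr ⟨mem_ccs_iff.mpr hsumc, hsum0, hsum1, hsumsupp⟩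
  have hadd := disj_add h𝔅 ρ hfcc hgcc hf0 hg0 hdisj
  calc ENNReal.ofReal (ρ.toFun f) + ENNReal.ofReal (ρ.toFun g)
      = ENNReal.ofReal (ρ.toFun (f + g)) := by
        rw [hadd, ENNReal.ofReal_add (ρ.pos f (ccs_subset h𝔅 hfcc) hf0)
          (ρ.pos g (ccs_subset h𝔅 hgcc) hg0)]
    _ ≤ muO ρ U := le_muO ρ hadm

/-- Superadditivity over disjoint open subsets. -/
lemma add_le_muO {𝔅 : Set (X →ᵇ ℝ)} (h𝔅 : 𝔅 = C0S X ∨ 𝔅 = CcS X) (ρ : QLF 𝔅)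
    {U V W : Set X} (hVU : V ⊆ U) (hWU : W ⊆ U) (hVW : Disjoint V W) :
    muO ρ V + muO ρ W ≤ muO ρ U := by
  rw [muO_eq ρ V, muO_eq ρ W]
  exact ENNReal.biSup_add_biSup_le' ⟨0, adm_zero V⟩ ⟨0, adm_zero W⟩
    fun f hf g hg => pair_le_muO h𝔅 ρ hVU hWU hVW hf hg

end MuRhoAux
open MuRhoAux in
/-- for a quasi-linear functional `ρ` on `C₀(X)` or on `C_c(X)`:
(i) `μ_ρ(U) = sup {μ_ρ(K) : K compact, K ⊆ U}` for open `U`;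
(ii) `μ_ρ(K ⊔ C) = μ_ρ(K) + μ_ρ(C)` for disjoint compact `K, C`;
(iii) `μ_ρ(U) = μ_ρ(K) + μ_ρ(U \ K)` for compact `K ⊆ U` open. -/
theorem muRho_regular_additive {X : Type u} [TopologicalSpace X]
    [LocallyCompactSpace X] [T2Space X] [ConnectedSpace X]
    (𝔅 : Set (X →ᵇ ℝ)) (h𝔅 : 𝔅 = C0S X ∨ 𝔅 = CcS X) (ρ : QLF 𝔅) :
    (∀ U : Set X, IsOpen U →
      muO ρ U = ⨆ K ∈ {K : Set X | IsCompact K ∧ K ⊆ U}, muC ρ K) ∧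
    (∀ K C : Set X, IsCompact K → IsCompact C → Disjoint K C →
      muC ρ (K ∪ C) = muC ρ K + muC ρ C) ∧
    (∀ (K U : Set X), IsCompact K → IsOpen U → K ⊆ U →
      muO ρ U = muC ρ K + muO ρ (U \ K)) := by
  refine ⟨?_, ?_, ?_⟩
  · -- (i) inner regularity
    intro U hU
    apply le_antisymm
    · rw [muO_eq]
      refine iSup₂_le fun f hf => ?_
      obtain ⟨hfcc, hf0, hf1, hfsupp⟩ := mem_adm_iff.mp hf
      have hKc : IsCompact (tsupport (f : X → ℝ)) := hfcc
      have h1 : ENNReal.ofReal (ρ.toFun f) ≤ muC ρ (tsupport (f : X → ℝ)) :=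
        le_iInf₂ fun V hV => le_muO ρ (mem_adm_iff.mpr ⟨hfcc, hf0, hf1, hV.2⟩)
      exact h1.trans (le_iSup₂
        (f := fun K (_ : K ∈ {K : Set X | IsCompact K ∧ K ⊆ U}) => muC ρ K)
        _ ⟨hKc, hfsupp⟩)
    · exact iSup₂_le fun K hK => muC_le_muO ρ hU hK.2
  · -- (ii) additivity on disjoint compacts
    intro K C hK hC hd
    obtain ⟨A, B, hAo, hBo, hKA, hCB, hAB⟩ := SeparatedNhds.of_isCompact_isCompact hK hC hd
    apply le_antisymm
    · have hmain : ∀ V ∈ {V : Set X | IsOpen V ∧ K ⊆ V},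
          ∀ W ∈ {W : Set X | IsOpen W ∧ C ⊆ W},
          muC ρ (K ∪ C) ≤ muO ρ V + muO ρ W := by
        rintro V ⟨hVo, hKV⟩ W ⟨hWo, hCW⟩
        have h1 : muC ρ (K ∪ C) ≤ muO ρ ((V ∩ A) ∪ (W ∩ B)) :=
          muC_le_muO ρ ((hVo.inter hAo).union (hWo.inter hBo))
            (Set.union_subset_union (Set.subset_inter hKV hKA) (Set.subset_inter hCW hCB))
        have h2 := split_le h𝔅 ρ (hVo.inter hAo) (hWo.inter hBo)
          (hAB.mono Set.inter_subset_right Set.inter_subset_right)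
        have h3 : muO ρ (V ∩ A) ≤ muO ρ V := muO_mono ρ Set.inter_subset_left
        have h4 : muO ρ (W ∩ B) ≤ muO ρ W := muO_mono ρ Set.inter_subset_left
        exact h1.trans (h2.trans (add_le_add h3 h4))
      calc muC ρ (K ∪ C)
          ≤ ⨅ V ∈ {V : Set X | IsOpen V ∧ K ⊆ V}, ⨅ W ∈ {W : Set X | IsOpen W ∧ C ⊆ W},
              (muO ρ V + muO ρ W) := le_iInf₂ fun V hV => le_iInf₂ fun W hW => hmain V hV W hW
        _ = muC ρ K + muC ρ C := by
            rw [muC, muC]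
            simp_rw [ENNReal.iInf_add, ENNReal.add_iInf]
    · refine le_iInf₂ fun U hU => ?_
      obtain ⟨hUo, hKCU⟩ := hU
      have h1 : muC ρ K ≤ muO ρ (U ∩ A) :=
        muC_le_muO ρ (hUo.inter hAo)
          (Set.subset_inter ((Set.subset_union_left).trans hKCU) hKA)
      have h2 : muC ρ C ≤ muO ρ (U ∩ B) :=
        muC_le_muO ρ (hUo.inter hBo)
          (Set.subset_inter ((Set.subset_union_right).trans hKCU) hCB)
      have h3 := add_le_muO h𝔅 ρ (U := U) (V := U ∩ A) (W := U ∩ B)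
        Set.inter_subset_left Set.inter_subset_left
        (hAB.mono Set.inter_subset_right Set.inter_subset_right)
      exact (add_le_add h1 h2).trans h3
  · -- (iii)
    intro K U hK hUo hKU
    apply le_antisymm
    · exact crux h𝔅 ρ hK hUo hKU
    · rw [muO_eq ρ (U \ K), ENNReal.add_biSup' ⟨0, adm_zero _⟩]
      refine iSup₂_le fun g hg => ?_
      obtain ⟨hgcc, hg0, hg1, hgsupp⟩ := mem_adm_iff.mp hg
      have hgc : IsCompact (tsupport (g : X → ℝ)) := hgcc
      have hdKg : Disjoint K (tsupport (g : X → ℝ)) :=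
        Set.disjoint_left.mpr fun x hxK hxg => (hgsupp hxg).2 hxK
      obtain ⟨A, B, hAo, hBo, hKA, hgB, hAB⟩ :=
        SeparatedNhds.of_isCompact_isCompact hK hgc hdKg
      have h1 : muC ρ K ≤ muO ρ (U ∩ A) :=
        muC_le_muO ρ (hUo.inter hAo) (Set.subset_inter hKU hKA)
      have h2 : muO ρ (U ∩ A) + ENNReal.ofReal (ρ.toFun g) ≤ muO ρ U := by
        rw [muO_eq ρ (U ∩ A), ENNReal.biSup_add' ⟨0, adm_zero _⟩]
        refine iSup₂_le fun f hf => ?_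
        have hg' : g ∈ Adm ((U \ K) ∩ B) :=
          mem_adm_iff.mpr ⟨hgcc, hg0, hg1, Set.subset_inter hgsupp hgB⟩
        exact pair_le_muO h𝔅 ρ (V := U ∩ A) (W := (U \ K) ∩ B)
          Set.inter_subset_left ((Set.inter_subset_left).trans Set.diff_subset)
          (hAB.mono Set.inter_subset_right Set.inter_subset_right) hf hg'
      calc muC ρ K + ENNReal.ofReal (ρ.toFun g)
          ≤ muO ρ (U ∩ A) + ENNReal.ofReal (ρ.toFun g) := add_le_add h1 le_rfl
        _ ≤ muO ρ U := h2
end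

section
/- Let X be a locally compact, Hausdorff, connected space and let ρ be a quasi-linear functional on C₀(X) with ‖ρ‖ < ∞. Then ρ is monotone: for all f, g ∈ C₀(X), if f ≥ g then ρ(f) ≥ ρ(g). -/
open Set Filter Topology MeasureTheory
open scoped ENNReal BoundedContinuousFunction

universe u

section Aux

variable {X : Type u} [TopologicalSpace X]

lemma c0s_add {f g : X →ᵇ ℝ} (hf : f ∈ C0S X) (hg : g ∈ C0S X) : f + g ∈ C0S X := by
  have := hf.add hg
  simpa [C0S, Pi.add_def] using this

lemma c0s_mul {f g : X →ᵇ ℝ} (hf : f ∈ C0S X) (hg : g ∈ C0S X) : f * g ∈ C0S X := by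
  have := hf.mul hg
  simpa [C0S, Pi.mul_def] using this

lemma c0s_smul (c : ℝ) {f : X →ᵇ ℝ} (hf : f ∈ C0S X) : c • f ∈ C0S X := by
  have := hf.const_mul c
  simpa [C0S] using this

lemma c0s_mem_family {h : X →ᵇ ℝ} (hh : h ∈ C0S X) :
    C0S X ∈ {S : Set (X →ᵇ ℝ) | S ⊆ C0S X ∧ h ∈ S ∧
      (∀ f g : X →ᵇ ℝ, f ∈ S → g ∈ S → f + g ∈ S) ∧
      (∀ f g : X →ᵇ ℝ, f ∈ S → g ∈ S → f * g ∈ S) ∧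
      (∀ (c : ℝ) (f : X →ᵇ ℝ), f ∈ S → c • f ∈ S) ∧
      IsClosed {x : ↥(C0S X) | (x : X →ᵇ ℝ) ∈ C0S X}} := by
  refine ⟨subset_rfl, hh, fun f g hf hg => c0s_add hf hg, fun f g hf hg => c0s_mul hf hg,
    fun c f hf => c0s_smul c hf, ?_⟩
  convert isClosed_univ using 1
  ext x; simp [x.2]

lemma sgen_subset {h : X →ᵇ ℝ} (hh : h ∈ C0S X) : sgen (C0S X) h ⊆ C0S X :=
  fun _ hx => hx _ (c0s_mem_family hh)

lemma mem_sgen_self (𝔅 : Set (X →ᵇ ℝ)) (h : X →ᵇ ℝ) : h ∈ sgen 𝔅 h :=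
  fun _ hS => hS.2.1

lemma sgen_add {𝔅 : Set (X →ᵇ ℝ)} {h f g : X →ᵇ ℝ} (hf : f ∈ sgen 𝔅 h)
    (hg : g ∈ sgen 𝔅 h) : f + g ∈ sgen 𝔅 h :=
  fun S hS => hS.2.2.1 f g (hf S hS) (hg S hS)

lemma sgen_mul {𝔅 : Set (X →ᵇ ℝ)} {h f g : X →ᵇ ℝ} (hf : f ∈ sgen 𝔅 h)
    (hg : g ∈ sgen 𝔅 h) : f * g ∈ sgen 𝔅 h :=
  fun S hS => hS.2.2.2.1 f g (hf S hS) (hg S hS)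

lemma sgen_smul {𝔅 : Set (X →ᵇ ℝ)} {h f : X →ᵇ ℝ} (c : ℝ) (hf : f ∈ sgen 𝔅 h) :
    c • f ∈ sgen 𝔅 h :=
  fun S hS => hS.2.2.2.2.1 c f (hf S hS)

lemma sgen_lim {𝔅 : Set (X →ᵇ ℝ)} {h F : X →ᵇ ℝ} (u : ℕ → X →ᵇ ℝ)
    (hu : ∀ n, u n ∈ sgen 𝔅 h) (hF : F ∈ 𝔅)
    (hlim : Tendsto u atTop (nhds F)) : F ∈ sgen 𝔅 h := by
  intro S hS
  have hsub : S ⊆ 𝔅 := hS.1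
  have hcl : IsClosed {x : ↥𝔅 | (x : X →ᵇ ℝ) ∈ S} := hS.2.2.2.2.2
  have hmem : ∀ n, (⟨u n, hsub (hu n S hS)⟩ : ↥𝔅) ∈ {x : ↥𝔅 | (x : X →ᵇ ℝ) ∈ S} :=
    fun n => hu n S hS
  have htend : Tendsto (fun n => (⟨u n, hsub (hu n S hS)⟩ : ↥𝔅)) atTop (nhds ⟨F, hF⟩) := by
    rw [IsInducing.subtypeVal.tendsto_nhds_iff]
    exact hlim
  exact hcl.mem_of_tendsto htend (Eventually.of_forall hmem)

lemma sgen_zero {𝔅 : Set (X →ᵇ ℝ)} (h : X →ᵇ ℝ) : (0 : X →ᵇ ℝ) ∈ sgen 𝔅 h := by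
  have := sgen_smul (𝔅 := 𝔅) (0 : ℝ) (mem_sgen_self 𝔅 h)
  simpa using this

lemma sgen_pow {𝔅 : Set (X →ᵇ ℝ)} (h : X →ᵇ ℝ) (n : ℕ) : h ^ (n + 1) ∈ sgen 𝔅 h := by
  induction n with
  | zero => simpa using mem_sgen_self 𝔅 h
  | succ n ih =>
      have := sgen_mul ih (mem_sgen_self 𝔅 h)
      simpa [pow_succ] using this

noncomputable def polyBCF (p : Polynomial ℝ) (h : X →ᵇ ℝ) : X →ᵇ ℝ :=
  ∑ k ∈ Finset.range (p.natDegree + 1), p.coeff k • h ^ k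

lemma polyBCF_mem {𝔅 : Set (X →ᵇ ℝ)} {p : Polynomial ℝ} (hp : p.coeff 0 = 0)
    (h : X →ᵇ ℝ) : polyBCF p h ∈ sgen 𝔅 h := by
  rw [polyBCF]
  have : ∀ n : ℕ, (∑ k ∈ Finset.range n, p.coeff k • h ^ k) ∈ sgen 𝔅 h := by
    intro n
    induction n with
    | zero => simpa using sgen_zero h
    | succ n ih =>
        rw [Finset.sum_range_succ]
        refine sgen_add ih ?_
        rcases Nat.eq_zero_or_pos n with rfl | hn
        · simp only [pow_zero, hp, zero_smul]
          exact sgen_zero h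
        · obtain ⟨m, rfl⟩ := Nat.exists_eq_add_of_lt hn
          exact sgen_smul _ (sgen_pow h _)
  exact this _

lemma polyBCF_apply (p : Polynomial ℝ) (h : X →ᵇ ℝ) (x : X) :
    polyBCF p h x = p.eval (h x) := by
  rw [polyBCF, Polynomial.eval_eq_sum_range]
  simp

lemma exists_poly_approx (φ : ℝ → ℝ) (hφ : Continuous φ) (hφ0 : φ 0 = 0)
    (M : ℝ) (hM : 0 ≤ M) {ε : ℝ} (hε : 0 < ε) :
    ∃ p : Polynomial ℝ, p.coeff 0 = 0 ∧ ∀ t ∈ Set.Icc (-M) M, |p.eval t - φ t| ≤ ε := by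
  have h0 : (0 : ℝ) ∈ Set.Icc (-M) M := ⟨by linarith, hM⟩
  set φ' : C(Set.Icc (-M) M, ℝ) := (ContinuousMap.mk φ hφ).restrict (Set.Icc (-M) M) with hφ'
  have hmem : φ' ∈ closure (polynomialFunctions (Set.Icc (-M) M) : Set C(Set.Icc (-M) M, ℝ)) := by
    have := polynomialFunctions_closure_eq_top (-M) M
    rw [← Subalgebra.topologicalClosure_coe] at *
    rw [this]
    trivial
  rw [Metric.mem_closure_iff] at hmem
  obtain ⟨q, hq, hdist⟩ := hmem (ε / 2) (by linarith)
  rw [polynomialFunctions_coe] at hq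
  obtain ⟨p, rfl⟩ := hq
  have hpt : ∀ t : Set.Icc (-M) M, |p.eval (t : ℝ) - φ t| ≤ ε / 2 := by
    intro t
    have := ContinuousMap.dist_apply_le_dist (f := φ') (g := (Polynomial.toContinuousMapOnAlgHom _ p)) t
    rw [Real.dist_eq] at this
    have h2 : |p.eval (t : ℝ) - φ t| = |φ' t - (Polynomial.toContinuousMapOnAlgHom _ p) t| := by
      simp [hφ', Polynomial.toContinuousMapOn, Polynomial.toContinuousMap, abs_sub_comm]
    rw [h2]
    exact this.trans hdist.le
  refine ⟨p - Polynomial.C (p.eval 0), ?_, ?_⟩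
  · simp [Polynomial.coeff_zero_eq_eval_zero]
  · intro t ht
    have h1 := hpt ⟨t, ht⟩
    have h2 := hpt ⟨0, h0⟩
    simp only at h1 h2
    have he : (p - Polynomial.C (p.eval 0)).eval t = p.eval t - p.eval 0 := by simp
    rw [he]
    have h2' : |Polynomial.eval 0 p| ≤ ε / 2 := by rwa [hφ0, sub_zero] at h2
    have hre : Polynomial.eval t p - Polynomial.eval 0 p - φ t
        = (Polynomial.eval t p - φ t) - Polynomial.eval 0 p := by ring
    rw [hre]
    calc |(Polynomial.eval t p - φ t) - Polynomial.eval 0 p|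
        ≤ |Polynomial.eval t p - φ t| + |Polynomial.eval 0 p| := abs_sub _ _
      _ ≤ ε / 2 + ε / 2 := add_le_add h1 h2'
      _ = ε := by ring

lemma comp_mem_sgen {h F : X →ᵇ ℝ} (hh : h ∈ C0S X) (hF : F ∈ C0S X)
    (φ : ℝ → ℝ) (hφ : Continuous φ) (hφ0 : φ 0 = 0) (hFeq : ∀ x, F x = φ (h x)) :
    F ∈ sgen (C0S X) h := by
  have key : ∀ n : ℕ, ∃ p : Polynomial ℝ, p.coeff 0 = 0 ∧
      dist (polyBCF p h) F ≤ 1 / (n + 1 : ℝ) := by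
    intro n
    obtain ⟨p, hp0, hp⟩ := exists_poly_approx φ hφ hφ0 ‖h‖ (norm_nonneg h)
      (ε := 1 / (n + 1 : ℝ)) (by positivity)
    refine ⟨p, hp0, ?_⟩
    refine BoundedContinuousFunction.dist_le (by positivity) |>.mpr fun x => ?_
    rw [Real.dist_eq, polyBCF_apply, hFeq x]
    exact hp (h x) (abs_le.mp (h.norm_coe_le_norm x))
  choose p hp0 hp using key
  refine sgen_lim (fun n => polyBCF (p n) h) (fun n => polyBCF_mem (hp0 n) h) hF ?_
  rw [tendsto_iff_dist_tendsto_zero]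
  refine squeeze_zero (fun n => dist_nonneg) hp ?_
  exact tendsto_one_div_add_atTop_nhds_zero_nat

lemma bcf_le_iff {f g : X →ᵇ ℝ} : f ≤ g ↔ ∀ x, f x ≤ g x := Iff.rfl

variable {ρ : QLF (C0S X)}

lemma rho_mono_sgen {h u v : X →ᵇ ℝ} (hh : h ∈ C0S X)
    (hu : u ∈ sgen (C0S X) h) (hv : v ∈ sgen (C0S X) h) (huv : u ≤ v) :
    ρ.toFun u ≤ ρ.toFun v := by
  have hvu : v - u ∈ sgen (C0S X) h := by
    have h1 := sgen_add hv (sgen_smul (-1 : ℝ) hu)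
    have h2 : v + (-1 : ℝ) • u = v - u := by
      ext x; simp [sub_eq_add_neg]
    rwa [h2] at h1
  have hadd : ρ.toFun (u + (v - u)) = ρ.toFun u + ρ.toFun (v - u) :=
    ρ.add_eq h hh u (v - u) hu hvu
  have hvpos : 0 ≤ ρ.toFun (v - u) := by
    refine ρ.pos _ (sgen_subset hh hvu) ?_
    rw [bcf_le_iff]
    intro x
    simp only [BoundedContinuousFunction.coe_zero, Pi.zero_apply,
      BoundedContinuousFunction.coe_sub, Pi.sub_apply]
    have := bcf_le_iff.mp huv x
    linarith
  have : u + (v - u) = v := by ring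
  rw [this] at hadd
  linarith

lemma rho_nonneg {f : X →ᵇ ℝ} (hf : f ∈ C0S X) (h0 : 0 ≤ f) : 0 ≤ ρ.toFun f :=
  ρ.pos f hf h0

lemma rho_le_norm {f : X →ᵇ ℝ} (hf : f ∈ C0S X) (h0 : 0 ≤ f) {ε : ℝ} (hε : 0 < ε)
    (hfe : ∀ x, f x ≤ ε) (hρ : qnorm ρ ≠ ∞) : ρ.toFun f ≤ ε * (qnorm ρ).toReal := by
  have hmem : ε⁻¹ • f ∈ C0S X := c0s_smul _ hf
  have h0' : 0 ≤ ε⁻¹ • f := by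
    rw [bcf_le_iff]; intro x
    have := bcf_le_iff.mp h0 x
    simp only [BoundedContinuousFunction.coe_zero, Pi.zero_apply] at this ⊢
    simp only [BoundedContinuousFunction.coe_smul, Pi.smul_apply, smul_eq_mul]
    positivity
  have h1' : ε⁻¹ • f ≤ 1 := by
    rw [bcf_le_iff]; intro x
    simp only [BoundedContinuousFunction.coe_smul, Pi.smul_apply, smul_eq_mul,
      BoundedContinuousFunction.coe_one, Pi.one_apply]
    rw [inv_mul_le_iff₀ hε]
    simpa using hfe x
  have hle : ENNReal.ofReal (ρ.toFun (ε⁻¹ • f)) ≤ qnorm ρ := by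
    refine le_iSup₂_of_le (ε⁻¹ • f) ⟨hmem, h0', h1'⟩ le_rfl
  have hreal : ρ.toFun (ε⁻¹ • f) ≤ (qnorm ρ).toReal := by
    have h00 : 0 ≤ ρ.toFun (ε⁻¹ • f) := ρ.pos _ hmem h0'
    have := ENNReal.toReal_mono hρ hle
    rwa [ENNReal.toReal_ofReal h00] at this
  have heq : ρ.toFun f = ε * ρ.toFun (ε⁻¹ • f) := by
    have := ρ.smul_eq ε⁻¹ f hf
    have h2 : ε * (ε⁻¹ * ρ.toFun f) = ε * ρ.toFun (ε⁻¹ • f) := by rw [this]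
    rw [← mul_assoc, mul_inv_cancel₀ hε.ne', one_mul] at h2
    exact h2
  rw [heq]
  exact mul_le_mul_of_nonneg_left hreal hε.le

/-- the layer cutoff function -/
def lay (a ε t : ℝ) : ℝ := min (max (t - a) 0) ε

lemma lay_lipschitz (a ε : ℝ) : LipschitzWith 1 (lay a ε) := by
  refine LipschitzWith.of_dist_le_mul fun t s => ?_
  simp only [NNReal.coe_one, one_mul, Real.dist_eq]
  unfold lay
  calc |min (max (t - a) 0) ε - min (max (s - a) 0) ε|
      ≤ max |max (t - a) 0 - max (s - a) 0| |ε - ε| := abs_min_sub_min_le_max _ _ _ _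
    _ ≤ |max (t - a) 0 - max (s - a) 0| := by simp
    _ ≤ |(t - a) - (s - a)| := abs_max_sub_max_le_abs _ _ _
    _ = |t - s| := by ring_nf

lemma lay_zero {a ε : ℝ} (ha : 0 ≤ a) (hε : 0 ≤ ε) : lay a ε 0 = 0 := by
  unfold lay
  rw [max_eq_right (by linarith), min_eq_left hε]

lemma lay_nonneg {a ε t : ℝ} (hε : 0 ≤ ε) : 0 ≤ lay a ε t :=
  le_min (le_max_right _ _) hε

lemma lay_le {a ε t : ℝ} : lay a ε t ≤ ε := min_le_right _ _

lemma lay_mono (a ε : ℝ) {t s : ℝ} (hts : t ≤ s) : lay a ε t ≤ lay a ε s :=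
  min_le_min (max_le_max (by linarith) le_rfl) le_rfl

lemma lay_eq_of_ge {a ε t : ℝ} (hε : 0 ≤ ε) (ht : a + ε ≤ t) : lay a ε t = ε := by
  unfold lay
  rw [max_eq_left (by linarith), min_eq_right (by linarith)]

lemma lay_pos_gt {a ε t : ℝ} (h : 0 < lay a ε t) : a < t := by
  by_contra hc
  push_neg at hc
  have : max (t - a) 0 = 0 := max_eq_right (by linarith)
  unfold lay at h
  rw [this] at h
  have := min_le_left (0:ℝ) ε
  linarith

lemma lay_sum {ε : ℝ} (hε : 0 ≤ ε) (N : ℕ) (t : ℝ) :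
    ∑ i ∈ Finset.range N, lay (i * ε) ε t = min (max t 0) (N * ε) := by
  induction N with
  | zero => simp [max_eq_right, min_eq_right]
  | succ N ih =>
      rw [Finset.sum_range_succ, ih]
      push_cast
      rcases le_total t ((N : ℝ) * ε) with h1 | h1
      · have hlast : lay ((N : ℝ) * ε) ε t = 0 := by
          unfold lay
          rw [max_eq_right (by linarith), min_eq_left hε]
        rw [hlast, add_zero]
        rcases le_total t 0 with h2 | h2
        · rw [max_eq_right h2, min_eq_left (by positivity), min_eq_left (by positivity)]
        · rw [max_eq_left h2, min_eq_left h1, min_eq_left (by nlinarith)]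
      · have h0 : (0:ℝ) ≤ t := le_trans (by positivity) h1
        rw [max_eq_left h0]
        rw [min_eq_right h1]
        unfold lay
        rw [max_eq_left (by linarith)]
        rcases le_total t ((N:ℝ) * ε + ε) with h2 | h2
        · rw [min_eq_left (by linarith), min_eq_left (by nlinarith)]
          ring
        · rw [min_eq_right (by linarith), min_eq_right (by nlinarith)]
          ring

lemma lipschitz_max0 : LipschitzWith 1 (fun t : ℝ => max t 0) := by
  refine LipschitzWith.of_dist_le_mul fun t s => ?_
  simp only [NNReal.coe_one, one_mul, Real.dist_eq]
  exact abs_max_sub_max_le_abs _ _ _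

lemma lipschitz_negmax0 : LipschitzWith 1 (fun t : ℝ => max (-t) 0) := by
  refine LipschitzWith.of_dist_le_mul fun t s => ?_
  simp only [NNReal.coe_one, one_mul, Real.dist_eq]
  have := abs_max_sub_max_le_abs (-t) (-s) 0
  calc |max (-t) 0 - max (-s) 0| ≤ |(-t) - (-s)| := this
    _ = |t - s| := by rw [← abs_neg]; ring_nf

lemma lipschitz_minconst (ε : ℝ) : LipschitzWith 1 (fun t : ℝ => min t ε) := by
  refine LipschitzWith.of_dist_le_mul fun t s => ?_
  simp only [NNReal.coe_one, one_mul, Real.dist_eq]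
  calc |min t ε - min s ε| ≤ max |t - s| |ε - ε| := abs_min_sub_min_le_max _ _ _ _
    _ ≤ |t - s| := by simp

noncomputable def layB (a ε : ℝ) (f : X →ᵇ ℝ) : X →ᵇ ℝ :=
  BoundedContinuousFunction.comp (lay a ε) (lay_lipschitz a ε) f

lemma layB_apply (a ε : ℝ) (f : X →ᵇ ℝ) (x : X) : layB a ε f x = lay a ε (f x) := rfl

lemma c0s_comp {f : X →ᵇ ℝ} (hf : f ∈ C0S X) (φ : ℝ → ℝ) (hφ : Continuous φ)
    (hφ0 : φ 0 = 0) (F : X →ᵇ ℝ) (hFeq : ∀ x, F x = φ (f x)) : F ∈ C0S X := by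
  have : Tendsto (φ ∘ (f : X → ℝ)) (cocompact X) (nhds 0) := by
    have := (hφ.tendsto 0).comp hf
    rwa [hφ0] at this
  have heq : (F : X → ℝ) = φ ∘ (f : X → ℝ) := funext hFeq
  simpa [C0S, heq] using this

lemma layB_mem_c0s {a ε : ℝ} (ha : 0 ≤ a) (hε : 0 ≤ ε) {f : X →ᵇ ℝ} (hf : f ∈ C0S X) :
    layB a ε f ∈ C0S X :=
  c0s_comp hf (lay a ε) (lay_lipschitz a ε).continuous (lay_zero ha hε) _
    (layB_apply a ε f)

lemma layB_mem_sgen {a ε : ℝ} (ha : 0 ≤ a) (hε : 0 ≤ ε) {f : X →ᵇ ℝ} (hf : f ∈ C0S X) :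
    layB a ε f ∈ sgen (C0S X) f :=
  comp_mem_sgen hf (layB_mem_c0s ha hε hf) (lay a ε) (lay_lipschitz a ε).continuous
    (lay_zero ha hε) (layB_apply a ε f)

lemma layB_sum {ε : ℝ} (hε : 0 ≤ ε) (N : ℕ) (f : X →ᵇ ℝ) (h0 : 0 ≤ f)
    (hN : ∀ x, f x ≤ N * ε) : ∑ i ∈ Finset.range N, layB (i * ε) ε f = f := by
  ext x
  rw [BoundedContinuousFunction.coe_sum, Finset.sum_apply]
  simp only [layB_apply]
  rw [lay_sum hε]
  have h0x : 0 ≤ f x := bcf_le_iff.mp h0 x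
  rw [max_eq_left h0x, min_eq_left (hN x)]

lemma sgen_sum {h : X →ᵇ ℝ} (u : ℕ → X →ᵇ ℝ)
    {𝔅 : Set (X →ᵇ ℝ)} (hu : ∀ i, u i ∈ sgen 𝔅 h) (N : ℕ) :
    (∑ i ∈ Finset.range N, u i) ∈ sgen 𝔅 h := by
  induction N with
  | zero => simpa using sgen_zero h
  | succ M ihM =>
      rw [Finset.sum_range_succ]
      exact sgen_add ihM (hu M)

lemma rho_sum_sgen {h : X →ᵇ ℝ} (hh : h ∈ C0S X) (u : ℕ → X →ᵇ ℝ)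
    (hu : ∀ i, u i ∈ sgen (C0S X) h) (N : ℕ) :
    ρ.toFun (∑ i ∈ Finset.range N, u i) = ∑ i ∈ Finset.range N, ρ.toFun (u i) := by
  induction N with
  | zero =>
      simp only [Finset.range_zero, Finset.sum_empty]
      have := ρ.smul_eq 0 0 (by exact (tendsto_const_nhds : Tendsto (fun _ : X => (0:ℝ)) (cocompact X) (nhds 0)))
      simpa using this
  | succ N ih =>
      have hpsum : (∑ i ∈ Finset.range N, u i) ∈ sgen (C0S X) h := sgen_sum u hu N
      rw [Finset.sum_range_succ, Finset.sum_range_succ, ← ih]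
      exact ρ.add_eq h hh _ _ hpsum (hu N)

lemma rho_lemmaA {ε : ℝ} (hε : 0 < ε) {k u : X →ᵇ ℝ} (hk : k ∈ C0S X) (hu : u ∈ C0S X)
    (hk0 : ∀ x, 0 ≤ k x) (hkε : ∀ x, k x ≤ ε) (hu0 : ∀ x, 0 ≤ u x) (huε : ∀ x, u x ≤ ε)
    (hflat : ∀ x, 0 < k x → u x = ε) : ρ.toFun k ≤ ρ.toFun u := by
  set h : X →ᵇ ℝ := u + k with hh
  have hhmem : h ∈ C0S X := c0s_add hu hk
  have hkx : ∀ x, k x = lay ε ε (h x) := by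
    intro x
    rcases (hk0 x).lt_or_eq with hpos | hzero
    · have hux := hflat x hpos
      have : h x = ε + k x := by
        simp [hh, hux]
      rw [this]
      unfold lay
      rw [show ε + k x - ε = k x by ring, max_eq_left (hk0 x), min_eq_left (hkε x)]
    · have : h x = u x := by simp [hh, ← hzero]
      rw [this]
      unfold lay
      rw [max_eq_right (by linarith [huε x]), min_eq_left hε.le, ← hzero]
  have hux : ∀ x, u x = min (h x) ε := by
    intro x
    rcases (hk0 x).lt_or_eq with hpos | hzero
    · have huxε := hflat x hpos
      have : h x = ε + k x := by simp [hh, huxε]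
      rw [this, min_eq_right (by linarith), huxε]
    · have : h x = u x := by simp [hh, ← hzero]
      rw [this, min_eq_left (huε x)]
  have hkmem : k ∈ sgen (C0S X) h :=
    comp_mem_sgen hhmem hk (lay ε ε) (lay_lipschitz ε ε).continuous
      (lay_zero hε.le hε.le) hkx
  have humem : u ∈ sgen (C0S X) h :=
    comp_mem_sgen hhmem hu (fun t => min t ε) (lipschitz_minconst ε).continuous
      (by simp [hε.le]) hux
  refine rho_mono_sgen hhmem hkmem humem ?_
  rw [bcf_le_iff]
  intro x
  rcases (hk0 x).lt_or_eq with hpos | hzero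
  · rw [hflat x hpos]; exact hkε x
  · rw [← hzero]; exact hu0 x

lemma rho_mono_nonneg (hρ : qnorm ρ ≠ ∞) {f g : X →ᵇ ℝ} (hf : f ∈ C0S X) (hg : g ∈ C0S X)
    (h0 : 0 ≤ g) (hgf : g ≤ f) : ρ.toFun g ≤ ρ.toFun f := by
  set C : ℝ := (qnorm ρ).toReal with hC
  have hC0 : 0 ≤ C := ENNReal.toReal_nonneg
  have h0f : 0 ≤ f := le_trans h0 hgf
  -- key estimate
  have key : ∀ ε : ℝ, 0 < ε → ρ.toFun g ≤ ρ.toFun f + ε * C := by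
    intro ε hε
    obtain ⟨N, hN⟩ := exists_nat_ge (‖f‖ / ε)
    have hfN : ∀ x, f x ≤ N * ε := by
      intro x
      have h1 : f x ≤ ‖f‖ := (abs_le.mp (f.norm_coe_le_norm x)).2
      have h2 : ‖f‖ ≤ N * ε := by
        rw [div_le_iff₀ hε] at hN
        linarith
      linarith
    have hgN : ∀ x, g x ≤ N * ε := fun x => le_trans (bcf_le_iff.mp hgf x) (hfN x)
    have hGmem : ∀ i : ℕ, layB (i * ε) ε f ∈ sgen (C0S X) f :=
      fun i => layB_mem_sgen (by positivity) hε.le hf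
    have hHmem : ∀ i : ℕ, layB (i * ε) ε g ∈ sgen (C0S X) g :=
      fun i => layB_mem_sgen (by positivity) hε.le hg
    have hrhof : ρ.toFun f = ∑ i ∈ Finset.range N, ρ.toFun (layB (i * ε) ε f) := by
      rw [← rho_sum_sgen hf _ hGmem N, layB_sum hε.le N f h0f hfN]
    have hrhog : ρ.toFun g = ∑ i ∈ Finset.range N, ρ.toFun (layB (i * ε) ε g) := by
      rw [← rho_sum_sgen hg _ hHmem N, layB_sum hε.le N g h0 hgN]
    rcases N with _ | m
    · simp only [Finset.range_zero, Finset.sum_empty] at hrhof hrhog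
      rw [hrhof, hrhog]
      positivity
    -- shift the sum
    have hstep : ∀ i : ℕ, ρ.toFun (layB ((i + 1 : ℕ) * ε) ε g) ≤ ρ.toFun (layB (i * ε) ε f) := by
      intro i
      refine rho_lemmaA hε (sgen_subset hg (hHmem (i+1))) (sgen_subset hf (hGmem i))
        (fun x => lay_nonneg hε.le) (fun x => lay_le) (fun x => lay_nonneg hε.le)
        (fun x => lay_le) ?_
      intro x hpos
      rw [layB_apply] at hpos ⊢
      have hgx : ((i + 1 : ℕ) : ℝ) * ε < g x := lay_pos_gt hpos
      have hfx : (i : ℝ) * ε + ε ≤ f x := by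
        have := bcf_le_iff.mp hgf x
        push_cast at hgx
        nlinarith
      exact lay_eq_of_ge hε.le hfx
    have hH0 : ρ.toFun (layB ((0 : ℕ) * ε) ε g) ≤ ε * C := by
      refine rho_le_norm (layB_mem_c0s (by positivity) hε.le hg) ?_ hε
        (fun x => lay_le) hρ
      rw [bcf_le_iff]
      intro x
      simpa [layB_apply] using lay_nonneg (a := ((0:ℕ) * ε)) (t := g x) hε.le
    have hGnn : ∀ i : ℕ, 0 ≤ ρ.toFun (layB (i * ε) ε f) := by
      intro i
      refine ρ.pos _ (sgen_subset hf (hGmem i)) ?_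
      rw [bcf_le_iff]
      intro x
      simpa [layB_apply] using lay_nonneg (a := ((i:ℕ) * ε)) (t := f x) hε.le
    calc ρ.toFun g = ∑ i ∈ Finset.range (m + 1), ρ.toFun (layB (i * ε) ε g) := hrhog
      _ = (∑ i ∈ Finset.range m, ρ.toFun (layB ((i + 1 : ℕ) * ε) ε g))
          + ρ.toFun (layB ((0:ℕ) * ε) ε g) := by rw [Finset.sum_range_succ']
      _ ≤ (∑ i ∈ Finset.range m, ρ.toFun (layB (i * ε) ε f)) + ε * C := by
          refine add_le_add (Finset.sum_le_sum fun i _ => hstep i) hH0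
      _ ≤ (∑ i ∈ Finset.range (m + 1), ρ.toFun (layB (i * ε) ε f)) + ε * C := by
          rw [Finset.sum_range_succ]
          have := hGnn m
          linarith
      _ = ρ.toFun f + ε * C := by rw [← hrhof]
  -- conclude
  refine le_of_forall_pos_le_add fun δ hδ => ?_
  have hεpos : 0 < δ / (C + 1) := by positivity
  have := key (δ / (C + 1)) hεpos
  have hfrac : δ / (C + 1) * C ≤ δ := by
    rw [div_mul_eq_mul_div, div_le_iff₀ (by linarith)]
    nlinarith
  linarith

noncomputable def posB (f : X →ᵇ ℝ) : X →ᵇ ℝ :=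
  BoundedContinuousFunction.comp (fun t => max t 0) lipschitz_max0 f

noncomputable def negB (f : X →ᵇ ℝ) : X →ᵇ ℝ :=
  BoundedContinuousFunction.comp (fun t => max (-t) 0) lipschitz_negmax0 f

lemma posB_apply (f : X →ᵇ ℝ) (x : X) : posB f x = max (f x) 0 := rfl
lemma negB_apply (f : X →ᵇ ℝ) (x : X) : negB f x = max (-f x) 0 := rfl

lemma posB_mem_c0s {f : X →ᵇ ℝ} (hf : f ∈ C0S X) : posB f ∈ C0S X :=
  c0s_comp hf _ lipschitz_max0.continuous (by simp) _ (posB_apply f)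

lemma negB_mem_c0s {f : X →ᵇ ℝ} (hf : f ∈ C0S X) : negB f ∈ C0S X :=
  c0s_comp hf _ lipschitz_negmax0.continuous (by simp) _ (negB_apply f)

lemma posB_nonneg (f : X →ᵇ ℝ) : 0 ≤ posB f := by
  rw [bcf_le_iff]; intro x
  simp only [BoundedContinuousFunction.coe_zero, Pi.zero_apply, posB_apply]
  exact le_max_right _ _

lemma negB_nonneg (f : X →ᵇ ℝ) : 0 ≤ negB f := by
  rw [bcf_le_iff]; intro x
  simp only [BoundedContinuousFunction.coe_zero, Pi.zero_apply, negB_apply]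
  exact le_max_right _ _

lemma rho_eq_posB_sub_negB {f : X →ᵇ ℝ} (hf : f ∈ C0S X) :
    ρ.toFun f = ρ.toFun (posB f) - ρ.toFun (negB f) := by
  have hfs : f ∈ sgen (C0S X) f := mem_sgen_self _ f
  have hns : negB f ∈ sgen (C0S X) f :=
    comp_mem_sgen hf (negB_mem_c0s hf) _ lipschitz_negmax0.continuous (by simp)
      (negB_apply f)
  have hadd : ρ.toFun (f + negB f) = ρ.toFun f + ρ.toFun (negB f) :=
    ρ.add_eq f hf _ _ hfs hns
  have heq : f + negB f = posB f := by
    ext x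
    simp only [BoundedContinuousFunction.coe_add, Pi.add_apply, posB_apply, negB_apply]
    rcases le_total (f x) 0 with h | h
    · rw [max_eq_left (by linarith), max_eq_right h]; ring
    · rw [max_eq_right (by linarith), max_eq_left h]; ring
  rw [heq] at hadd
  linarith


end Aux

/-- a quasi-linear functional on `C₀(X)` with `‖ρ‖ < ∞` is monotone. -/
theorem qlf_monotone_of_bounded {X : Type u} [TopologicalSpace X]
    [LocallyCompactSpace X] [T2Space X] [ConnectedSpace X]
    (ρ : QLF (C0S X)) (hρ : qnorm ρ ≠ ∞)
    (f g : X →ᵇ ℝ) (hf : f ∈ C0S X) (hg : g ∈ C0S X) (hle : g ≤ f) :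
    ρ.toFun g ≤ ρ.toFun f := by
  have hpf := posB_mem_c0s hf
  have hpg := posB_mem_c0s hg
  have hnf := negB_mem_c0s hf
  have hng := negB_mem_c0s hg
  have h1 : ρ.toFun (posB g) ≤ ρ.toFun (posB f) := by
    refine rho_mono_nonneg hρ hpf hpg (posB_nonneg g) ?_
    rw [bcf_le_iff]
    intro x
    simp only [posB_apply]
    exact max_le_max (bcf_le_iff.mp hle x) le_rfl
  have h2 : ρ.toFun (negB f) ≤ ρ.toFun (negB g) := by
    refine rho_mono_nonneg hρ hng hnf (negB_nonneg f) ?_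
    rw [bcf_le_iff]
    intro x
    simp only [negB_apply]
    refine max_le_max ?_ le_rfl
    have := bcf_le_iff.mp hle x
    linarith
  rw [rho_eq_posB_sub_negB hf, rho_eq_posB_sub_negB hg]
  linarith
end
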